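/- Let H, R be finite-dimensional complex Hilbert spaces, B = ℂ², |ψ⟩ a unit vector in H⊗B⊗R, n ≥ 1, and η ∈ [0,1]. If there exists a (1, 1−η)-superdense decoder against |ψ⟩, then the n-slot candidate EFI pair (ρ̄₀, ρ̄₁) built from |ψ⟩ is statistically distinguishable with advantage at least 1 − 2nη: there exists a matrix M with 0 ≤ M ≤ I on (B⊗R)^{⊗n} ⊗ ℂ^{4ⁿ} ⊗ ℂ² such that Tr[M(ρ̄₁ − ρ̄₀)] ≥ 1 − 2nη. -/

import Mathlib

open Matrix BigOperators
open scoped ComplexOrder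

noncomputable section

namespace BHRD

/-- A (qu)bit index. -/
abbrev Bit := ZMod 2

/-- The Pauli `X` matrix. -/
def Xm : Matrix Bit Bit ℂ := Matrix.of fun i j => if i = j + 1 then 1 else 0

/-- The Pauli `Z` matrix. -/
def Zm : Matrix Bit Bit ℂ := Matrix.of fun i j => if i = j then (if j = 1 then -1 else 1) else 0

/-- The Pauli mask `X^x Z^z`. -/
def pauli (x z : Bit) : Matrix Bit Bit ℂ := Xm ^ x.val * Zm ^ z.val

/-- The EPR vector `(|00⟩+|11⟩)/√2`. -/
def epr : Bit × Bit → ℂ := fun p => if p.1 = p.2 then (((Real.sqrt 2 : ℝ) : ℂ))⁻¹ else 0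

variable {dH dR : ℕ}

/-- The reduced density matrix of `|ψ⟩ ∈ H ⊗ B ⊗ R` on `B ⊗ R`, i.e. `Tr_H |ψ⟩⟨ψ|`. -/
def rhoBR (ψ : Fin dH × Bit × Fin dR → ℂ) :
    Matrix (Bit × Fin dR) (Bit × Fin dR) ℂ :=
  Matrix.of fun p q => ∑ h : Fin dH, ψ (h, p) * (starRingEnd ℂ) (ψ (h, q))

/-- `(X^x Z^z) ⊗ I_R` acting on `B ⊗ R`. -/
def maskB (dR : ℕ) (x z : Bit) : Matrix (Bit × Fin dR) (Bit × Fin dR) ℂ :=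
  Matrix.of fun p q => if p.2 = q.2 then pauli x z p.1 q.1 else 0

/-- The masked state `ρ^{xz} = (X^x Z^z ⊗ I) Tr_H|ψ⟩⟨ψ| (X^x Z^z ⊗ I)†`. -/
def rhoXZ (ψ : Fin dH × Bit × Fin dR → ℂ) (x z : Bit) :
    Matrix (Bit × Fin dR) (Bit × Fin dR) ℂ :=
  maskB dR x z * rhoBR ψ * (maskB dR x z)ᴴ

/-- `K` is a family of Kraus operators for a (trace-preserving) quantum channel. -/
def IsKraus {α β : Type*} [Fintype α] [Fintype β] [DecidableEq β] {k : ℕ}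
    (K : Fin k → Matrix α β ℂ) : Prop :=
  ∑ i, (K i)ᴴ * K i = 1

/-- Application of the channel with Kraus operators `K` to a state `ρ`. -/
def applyCh {α β : Type*} [Fintype α] [Fintype β] {k : ℕ}
    (K : Fin k → Matrix α β ℂ) (ρ : Matrix β β ℂ) : Matrix α α ℂ :=
  ∑ i, K i * ρ * (K i)ᴴ

/-- The extension `id_B ⊗ A` of a channel `A : R → D ⊗ F` given by a Kraus operator `K`:
a Kraus operator from `B ⊗ R` to `B ⊗ D ⊗ F`. -/
def extB (K : Matrix (Bit × Bit) (Fin dR) ℂ) :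
    Matrix (Bit × Bit × Bit) (Bit × Fin dR) ℂ :=
  Matrix.of fun p q => if p.1 = q.1 then K p.2 q.2 else 0

/-- The projector `I_{B⊗D} ⊗ |0⟩⟨0|_F` on `B ⊗ D ⊗ F`. -/
def PF0 : Matrix (Bit × Bit × Bit) (Bit × Bit × Bit) ℂ :=
  Matrix.of fun p q =>
    if p.1 = q.1 ∧ p.2.1 = q.2.1 ∧ p.2.2 = 0 ∧ q.2.2 = 0 then 1 else 0

/-- The projector `|epr⟩⟨epr|_{B⊗D} ⊗ |0⟩⟨0|_F` on `B ⊗ D ⊗ F`. -/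
def Pepr0 : Matrix (Bit × Bit × Bit) (Bit × Bit × Bit) ℂ :=
  Matrix.of fun p q =>
    (if p.2.2 = 0 ∧ q.2.2 = 0 then 1 else 0) *
      (epr (p.1, p.2.1) * (starRingEnd ℂ) (epr (q.1, q.2.1)))

/-- `K` is (the Kraus family of) a `(γ,ε)`-radiation decoder against `ψ`. -/
def IsRadDecoder (ψ : Fin dH × Bit × Fin dR → ℂ) (γ ε : ℝ) {k : ℕ}
    (K : Fin k → Matrix (Bit × Bit) (Fin dR) ℂ) : Prop :=
  IsKraus K ∧
  γ ≤ ((PF0 * applyCh (fun i => extB (K i)) (rhoBR ψ)).trace).re ∧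
  ((PF0 * applyCh (fun i => extB (K i)) (rhoBR ψ)).trace).re * (1/4 + (3/4) * ε) ≤
    ((Pepr0 * applyCh (fun i => extB (K i)) (rhoBR ψ)).trace).re

/-- The projector `I_P ⊗ |0⟩⟨0|_F` on `P ⊗ F`. -/
def QF0 : Matrix ((Bit × Bit) × Bit) ((Bit × Bit) × Bit) ℂ :=
  Matrix.of fun p q => if p.1 = q.1 ∧ p.2 = 0 ∧ q.2 = 0 then 1 else 0

/-- The projector `|x,z⟩⟨x,z|_P ⊗ |0⟩⟨0|_F` on `P ⊗ F`. -/
def Qxz0 (x z : Bit) : Matrix ((Bit × Bit) × Bit) ((Bit × Bit) × Bit) ℂ :=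
  Matrix.of fun p q => if p = ((x, z), 0) ∧ q = ((x, z), 0) then 1 else 0

/-- `K` is (the Kraus family of) a `(γ,ε)`-superdense decoder against `ψ`. -/
def IsSupDecoder (ψ : Fin dH × Bit × Fin dR → ℂ) (γ ε : ℝ) {k : ℕ}
    (K : Fin k → Matrix ((Bit × Bit) × Bit) (Bit × Fin dR) ℂ) : Prop :=
  IsKraus K ∧
  γ ≤ (1/4) * ∑ x : Bit, ∑ z : Bit, ((QF0 * applyCh K (rhoXZ ψ x z)).trace).re ∧
  ((1/4) * ∑ x : Bit, ∑ z : Bit, ((QF0 * applyCh K (rhoXZ ψ x z)).trace).re) *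
      (1/4 + (3/4) * ε) ≤
    (1/4) * ∑ x : Bit, ∑ z : Bit, ((Qxz0 x z * applyCh K (rhoXZ ψ x z)).trace).re

end BHRD

namespace BHRD

variable {dH dR : ℕ}

/-- Inner product of bit vectors mod 2. -/
def dotB {n : ℕ} (a x : Fin n → Bit) : Bit := ∑ i, a i * x i

/-- The product state `ρ^{x⃗z⃗} = ⊗ᵢ ρ^{xᵢzᵢ}` on `(B ⊗ R)^{⊗n}`. -/
def rhoVec (ψ : Fin dH × Bit × Fin dR → ℂ) {n : ℕ} (x z : Fin n → Bit) :
    Matrix (Fin n → Bit × Fin dR) (Fin n → Bit × Fin dR) ℂ :=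
  Matrix.of fun u v => ∏ i, rhoXZ ψ (x i) (z i) (u i) (v i)

/-- The `n`-slot candidate EFI state
`ρ̄_b = 4^{-2n} Σ_{x⃗,z⃗,a⃗,a⃗'} ρ^{x⃗z⃗} ⊗ |a⃗,a⃗'⟩⟨a⃗,a⃗'| ⊗ |c ⊕ b⟩⟨c ⊕ b|` with
`c = (a⃗·x⃗) ⊕ (a⃗'·z⃗)`, on `(B ⊗ R)^{⊗n} ⊗ ℂ^{4ⁿ} ⊗ ℂ²`. -/
def rbarN (ψ : Fin dH × Bit × Fin dR → ℂ) (n : ℕ) (b : Bit) :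
    Matrix ((Fin n → Bit × Fin dR) × ((Fin n → Bit) × (Fin n → Bit)) × Bit)
           ((Fin n → Bit × Fin dR) × ((Fin n → Bit) × (Fin n → Bit)) × Bit) ℂ :=
  (((4 : ℂ) ^ (2 * n))⁻¹) •
    ∑ x : Fin n → Bit, ∑ z : Fin n → Bit, ∑ a : Fin n → Bit, ∑ a' : Fin n → Bit,
      Matrix.of fun p q =>
        (if p.2 = ((a, a'), dotB a x + dotB a' z + b) ∧
            q.2 = ((a, a'), dotB a x + dotB a' z + b) then 1 else 0) *
          rhoVec ψ x z p.1 q.1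

end BHRD


namespace BHRD

section Helpers


lemma psd_sum {m ι : Type*} [Fintype m] (s : Finset ι) (f : ι → Matrix m m ℂ)
    (h : ∀ i ∈ s, (f i).PosSemidef) : (∑ i ∈ s, f i).PosSemidef := by
  induction s using Finset.cons_induction with
  | empty => simpa using (Matrix.PosSemidef.zero (n := m) (R := ℂ))
  | cons a s ha ih =>
    rw [Finset.sum_cons]
    exact (h a (Finset.mem_cons_self a s)).add (ih fun i hi => h i (Finset.mem_cons_of_mem hi))

lemma psd_exists_eq_conjTranspose_mul_self {m : Type*} [Fintype m] {A : Matrix m m ℂ}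
    (hA : A.PosSemidef) : ∃ B : Matrix m m ℂ, A = Bᴴ * B := by
  classical
  open scoped MatrixOrder in
  obtain ⟨B, hB⟩ := CStarAlgebra.nonneg_iff_eq_star_mul_self.mp hA.nonneg
  exact ⟨B, hB⟩

lemma tensor_psd {n : ℕ} {κ : Type*} [Fintype κ] [DecidableEq κ]
    (A : Fin n → Matrix κ κ ℂ) (h : ∀ i, (A i).PosSemidef) :
    (Matrix.of fun u v : Fin n → κ => ∏ i, A i (u i) (v i)).PosSemidef := by
  choose B hB using fun i => psd_exists_eq_conjTranspose_mul_self (h i)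
  have key : (Matrix.of fun u v : Fin n → κ => ∏ i, A i (u i) (v i))
      = (Matrix.of fun w u : Fin n → κ => ∏ i, B i (w i) (u i))ᴴ *
        (Matrix.of fun w u : Fin n → κ => ∏ i, B i (w i) (u i)) := by
    ext u v
    simp only [Matrix.mul_apply, Matrix.conjTranspose_apply, Matrix.of_apply, star_prod]
    calc ∏ i, A i (u i) (v i)
        = ∏ i, ∑ w : κ, star (B i w (u i)) * B i w (v i) := by
          refine Finset.prod_congr rfl fun i _ => ?_
          rw [hB i]; simp [Matrix.mul_apply, Matrix.conjTranspose_apply]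
      _ = ∑ w : Fin n → κ, ∏ i, star (B i (w i) (u i)) * B i (w i) (v i) :=
          Fintype.prod_sum _
      _ = ∑ w : Fin n → κ, (∏ i, star (B i (w i) (u i))) * ∏ i, B i (w i) (v i) := by
          simp [Finset.prod_mul_distrib]
  rw [key]
  exact Matrix.posSemidef_conjTranspose_mul_self _

lemma kron_psd {α β : Type*} [Fintype α] [Fintype β]
    {A : Matrix α α ℂ} {B : Matrix β β ℂ} (hA : A.PosSemidef) (hB : B.PosSemidef) :
    (Matrix.of fun p q : α × β => A p.1 q.1 * B p.2 q.2).PosSemidef := by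
  obtain ⟨A', hA'⟩ := psd_exists_eq_conjTranspose_mul_self hA
  obtain ⟨B', hB'⟩ := psd_exists_eq_conjTranspose_mul_self hB
  have key : (Matrix.of fun p q : α × β => A p.1 q.1 * B p.2 q.2)
      = (Matrix.of fun w p : α × β => A' w.1 p.1 * B' w.2 p.2)ᴴ *
        (Matrix.of fun w p : α × β => A' w.1 p.1 * B' w.2 p.2) := by
    ext p q
    simp only [Matrix.mul_apply, Matrix.conjTranspose_apply, Matrix.of_apply]
    calc A p.1 q.1 * B p.2 q.2
        = (∑ w1, star (A' w1 p.1) * A' w1 q.1) * (∑ w2, star (B' w2 p.2) * B' w2 q.2) := by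
          rw [hA', hB']; simp [Matrix.mul_apply, Matrix.conjTranspose_apply]
      _ = ∑ w1, ∑ w2, (star (A' w1 p.1) * A' w1 q.1) * (star (B' w2 p.2) * B' w2 q.2) := by
          rw [Finset.sum_mul_sum]
      _ = ∑ w : α × β, star (A' w.1 p.1 * B' w.2 p.2) * (A' w.1 q.1 * B' w.2 q.2) := by
          rw [Fintype.sum_prod_type]
          exact Finset.sum_congr rfl fun w1 _ => Finset.sum_congr rfl fun w2 _ => by
            simp only [star_mul']; ring
  rw [key]
  exact Matrix.posSemidef_conjTranspose_mul_self _



lemma proj_psd {γ : Type*} [Fintype γ] [DecidableEq γ] (c : γ) :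
    (Matrix.of fun d d' : γ => if d = c ∧ d' = c then (1:ℂ) else 0).PosSemidef := by
  have key : (Matrix.of fun d d' : γ => if d = c ∧ d' = c then (1:ℂ) else 0)
      = (Matrix.of fun d d' : γ => if d = c ∧ d' = c then (1:ℂ) else 0)ᴴ *
        (Matrix.of fun d d' : γ => if d = c ∧ d' = c then (1:ℂ) else 0) := by
    ext d d'
    simp only [Matrix.mul_apply, Matrix.conjTranspose_apply, Matrix.of_apply]
    rw [Finset.sum_eq_single c] <;> by_cases hd : d = c <;> by_cases hd' : d' = c <;>
      simp_all
  rw [key]; exact Matrix.posSemidef_conjTranspose_mul_self _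

lemma prod_sub_prod {n : ℕ} (a b : Fin n → ℂ) :
    ∏ i, a i - ∏ i, b i =
      ∑ j : Fin n, ∏ i, (if i < j then a i else if i = j then a i - b i else b i) := by
  induction n with
  | zero => simp
  | succ n ih =>
    rw [Fin.prod_univ_succ a, Fin.prod_univ_succ b, Fin.sum_univ_succ]
    have h0 : (∏ i : Fin (n+1), (if i < 0 then a i else if i = 0 then a i - b i else b i))
        = (a 0 - b 0) * ∏ i : Fin n, b i.succ := by
      rw [Fin.prod_univ_succ]
      simp [Fin.succ_ne_zero]
    have hs : ∀ j : Fin n, (∏ i : Fin (n+1),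
          (if i < j.succ then a i else if i = j.succ then a i - b i else b i))
        = a 0 * ∏ i : Fin n, (if i < j then a i.succ
            else if i = j then a i.succ - b i.succ else b i.succ) := by
      intro j
      rw [Fin.prod_univ_succ]
      congr 1
      · simp [Fin.succ_pos]
    rw [h0]
    simp_rw [hs]
    rw [← Finset.mul_sum, ← ih (fun i => a i.succ) (fun i => b i.succ)]
    ring

lemma one_sub_tensor_psd {n : ℕ} {κ : Type*} [Fintype κ] [DecidableEq κ]
    {G : Matrix κ κ ℂ} (hG : G.PosSemidef) (hG1 : ((1 : Matrix κ κ ℂ) - G).PosSemidef) :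
    ((1 : Matrix (Fin n → κ) (Fin n → κ) ℂ) -
      Matrix.of fun u v : Fin n → κ => ∏ i, G (u i) (v i)).PosSemidef := by
  have key : (1 : Matrix (Fin n → κ) (Fin n → κ) ℂ) -
        (Matrix.of fun u v : Fin n → κ => ∏ i, G (u i) (v i))
      = ∑ j : Fin n, Matrix.of (fun u v : Fin n → κ =>
          ∏ i, (if i < j then (1 : Matrix κ κ ℂ)
            else if i = j then 1 - G else G) (u i) (v i)) := by
    ext u v
    simp only [Matrix.sub_apply, Matrix.one_apply, Matrix.of_apply, Matrix.sum_apply]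
    have h1 : (if u = v then (1:ℂ) else 0) = ∏ i, (1 : Matrix κ κ ℂ) (u i) (v i) := by
      simp only [Matrix.one_apply, Finset.prod_boole, funext_iff]
      simp
    rw [h1, prod_sub_prod (fun i => (1 : Matrix κ κ ℂ) (u i) (v i)) (fun i => G (u i) (v i))]
    refine Finset.sum_congr rfl fun j _ => Finset.prod_congr rfl fun i _ => ?_
    split_ifs <;> simp [Matrix.sub_apply]
  rw [key]
  refine psd_sum _ _ fun j _ => tensor_psd _ fun i => ?_
  split_ifs with h1 h2
  · exact Matrix.PosSemidef.one
  · exact hG1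
  · exact hG

lemma psd_trace_real {m : Type*} [Fintype m] [DecidableEq m] {A : Matrix m m ℂ} (hA : A.PosSemidef) :
    ∃ r : ℝ, 0 ≤ r ∧ A.trace = (r : ℂ) := by
  have hd : ∀ i, 0 ≤ A i i := fun i => hA.diag_nonneg
  have ht : 0 ≤ A.trace := by
    rw [Matrix.trace]
    exact Finset.sum_nonneg fun i _ => hd i
  rw [Complex.le_def] at ht
  refine ⟨A.trace.re, by simpa using ht.1, ?_⟩
  apply Complex.ext
  · simp
  · simpa using ht.2.symm

lemma psd_mul_trace_real {m : Type*} [Fintype m] [DecidableEq m] {A B : Matrix m m ℂ}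
    (hA : A.PosSemidef) (hB : B.PosSemidef) :
    ∃ r : ℝ, 0 ≤ r ∧ (A * B).trace = (r : ℂ) := by
  obtain ⟨C, rfl⟩ := psd_exists_eq_conjTranspose_mul_self hA
  rw [Matrix.mul_assoc, Matrix.trace_mul_comm]
  exact psd_trace_real (by simpa [Matrix.mul_assoc] using hB.mul_mul_conjTranspose_same C)


def chi (s : Bit) : ℂ := if s = 0 then 1 else -1

lemma chi_zero : chi 0 = 1 := by simp [chi]

lemma chi_add (s t : Bit) : chi (s + t) = chi s * chi t := by
  have hs : s = 0 ∨ s = 1 := by revert s; decide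
  have ht : t = 0 ∨ t = 1 := by revert t; decide
  have h11 : (1 + 1 : Bit) = 0 := by decide
  rcases hs with rfl | rfl <;> rcases ht with rfl | rfl <;> simp [chi, h11]

lemma chi_sum {ι : Type*} (s : Finset ι) (f : ι → Bit) :
    chi (∑ i ∈ s, f i) = ∏ i ∈ s, chi (f i) := by
  induction s using Finset.cons_induction with
  | empty => simp [chi_zero]
  | cons a s ha ih => rw [Finset.sum_cons, Finset.prod_cons, chi_add, ih]

lemma chi_eq_sub (s : Bit) :
    chi s = (if s = 0 then (1:ℂ) else 0) - (if s = 1 then (1:ℂ) else 0) := by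
  have hs : s = 0 ∨ s = 1 := by revert s; decide
  rcases hs with rfl | rfl <;> norm_num [chi]

lemma sum_chi_single (w : Bit) : (∑ t : Bit, chi (t * w)) = if w = 0 then 2 else 0 := by
  have key : (∑ t : Bit, chi (t * w)) = chi (0 * w) + chi (1 * w) :=
    Fin.sum_univ_two (f := fun t : Bit => chi (t * w))
  rw [key]
  have hs := (by decide : ∀ w : Bit, w = 0 ∨ w = 1) w
  rcases hs with rfl | rfl <;> simp [chi] <;> norm_num

lemma char_sum {n : ℕ} (w : Fin n → Bit) :
    (∑ a : Fin n → Bit, chi (dotB a w)) = if w = 0 then (2:ℂ)^n else 0 := by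
  have h1 : ∀ a : Fin n → Bit, chi (dotB a w) = ∏ i, chi (a i * w i) := fun a =>
    chi_sum Finset.univ fun i => a i * w i
  simp_rw [h1]
  rw [← Fintype.prod_sum fun i t => chi (t * w i)]
  simp_rw [sum_chi_single]
  have : (∏ i, if w i = 0 then (2:ℂ) else 0) = ∏ i, (2:ℂ) * (if w i = 0 then 1 else 0) := by
    refine Finset.prod_congr rfl fun i _ => by split_ifs <;> ring
  rw [this, Finset.prod_mul_distrib, Finset.prod_const, Finset.prod_boole]
  simp only [Finset.card_univ, Fintype.card_fin]
  by_cases hw : w = 0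
  · subst hw; simp
  · have h2 : ¬ ∀ i ∈ (Finset.univ : Finset (Fin n)), w i = 0 := by
      simpa [funext_iff] using hw
    simp only [if_neg hw, if_neg h2, mul_zero]

lemma dotB_add_right {n : ℕ} (a x y : Fin n → Bit) :
    dotB a (x + y) = dotB a x + dotB a y := by
  simp [dotB, mul_add, Finset.sum_add_distrib]

lemma add_eq_zero_iff_bitvec {n : ℕ} (x y : Fin n → Bit) : x + y = 0 ↔ x = y := by
  constructor
  · intro h; funext i
    have h2 := congrFun h i
    have : x i + y i = 0 := h2
    have hb : ∀ s t : Bit, s + t = 0 → s = t := by decide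
    exact hb _ _ this
  · rintro rfl; funext i
    have : x i + x i = 0 := by
      have hb : ∀ s : Bit, s + s = 0 := by decide
      exact hb _
    exact this


end Helpers

section Domain

variable {dH dR k : ℕ}

/-- The POVM element `E_{xz} = Σᵢ Kᵢᴴ (|x,z⟩⟨x,z| ⊗ |0⟩⟨0|) Kᵢ`. -/
def Eop (K : Fin k → Matrix ((Bit × Bit) × Bit) (Bit × Fin dR) ℂ) (x z : Bit) :
    Matrix (Bit × Fin dR) (Bit × Fin dR) ℂ :=
  ∑ i, (K i)ᴴ * Qxz0 x z * K i

lemma Qxz0_psd (x z : Bit) : (Qxz0 x z).PosSemidef := proj_psd ((x, z), (0 : Bit))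

lemma Eop_psd (K : Fin k → Matrix ((Bit × Bit) × Bit) (Bit × Fin dR) ℂ) (x z : Bit) :
    (Eop K x z).PosSemidef :=
  psd_sum _ _ fun i _ => (Qxz0_psd x z).conjTranspose_mul_mul_same (K i)

lemma sum_Qxz0 : (∑ x : Bit, ∑ z : Bit, Qxz0 x z) =
    Matrix.of fun p q : (Bit × Bit) × Bit => if p = q ∧ p.2 = 0 then (1:ℂ) else 0 := by
  ext p q
  obtain ⟨⟨px, pz⟩, pf⟩ := p
  obtain ⟨⟨qx, qz⟩, qf⟩ := q
  have hb := (by decide : ∀ b : Bit, b = 0 ∨ b = 1)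
  have hsum : ∀ f : Bit → ℂ, (∑ x : Bit, f x) = f 0 + f 1 := fun f => Fin.sum_univ_two f
  simp only [Matrix.sum_apply, Qxz0, Matrix.of_apply]
  rw [hsum, hsum, hsum]
  rcases hb px with rfl|rfl <;> rcases hb pz with rfl|rfl <;> rcases hb pf with rfl|rfl <;>
    rcases hb qx with rfl|rfl <;> rcases hb qz with rfl|rfl <;> rcases hb qf with rfl|rfl <;>
    norm_num [Prod.ext_iff]

lemma one_sub_Qsum_psd :
    ((1 : Matrix ((Bit × Bit) × Bit) ((Bit × Bit) × Bit) ℂ) -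
      ∑ x : Bit, ∑ z : Bit, Qxz0 x z).PosSemidef := by
  rw [sum_Qxz0]
  have key : (1 : Matrix ((Bit × Bit) × Bit) ((Bit × Bit) × Bit) ℂ) -
        Matrix.of (fun p q : (Bit × Bit) × Bit => if p = q ∧ p.2 = 0 then (1:ℂ) else 0)
      = Matrix.diagonal (fun p : (Bit × Bit) × Bit => if p.2 = 0 then 0 else 1) := by
    ext p q
    by_cases h : p = q
    · subst h
      by_cases h2 : p.2 = 0 <;> simp [h2, Matrix.one_apply, Matrix.diagonal_apply_eq]
    · simp [Matrix.one_apply, h, Matrix.diagonal_apply_ne _ h]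
  rw [key]
  refine Matrix.posSemidef_diagonal_iff.mpr fun p => ?_
  split_ifs
  · exact le_refl _
  · exact zero_le_one

lemma one_sub_Esum_psd {K : Fin k → Matrix ((Bit × Bit) × Bit) (Bit × Fin dR) ℂ}
    (hK : IsKraus K) :
    ((1 : Matrix (Bit × Fin dR) (Bit × Fin dR) ℂ) -
      ∑ x : Bit, ∑ z : Bit, Eop K x z).PosSemidef := by
  have key : (1 : Matrix (Bit × Fin dR) (Bit × Fin dR) ℂ) - ∑ x : Bit, ∑ z : Bit, Eop K x z
      = ∑ i, (K i)ᴴ * ((1 : Matrix ((Bit × Bit) × Bit) ((Bit × Bit) × Bit) ℂ) -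
          ∑ x : Bit, ∑ z : Bit, Qxz0 x z) * K i := by
    have h1 : ∑ i, (K i)ᴴ * ((1 : Matrix ((Bit × Bit) × Bit) ((Bit × Bit) × Bit) ℂ) -
          ∑ x : Bit, ∑ z : Bit, Qxz0 x z) * K i
        = (∑ i, (K i)ᴴ * K i) - ∑ i, (K i)ᴴ * (∑ x : Bit, ∑ z : Bit, Qxz0 x z) * K i := by
      rw [← Finset.sum_sub_distrib]
      refine Finset.sum_congr rfl fun i _ => ?_
      rw [Matrix.mul_sub, Matrix.sub_mul, Matrix.mul_one]
    rw [h1, hK]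
    congr 1
    simp only [Eop, Matrix.sum_mul, Matrix.mul_sum]
    calc ∑ x : Bit, ∑ z : Bit, ∑ i, (K i)ᴴ * Qxz0 x z * K i
        = ∑ x : Bit, ∑ i, ∑ z : Bit, (K i)ᴴ * Qxz0 x z * K i :=
          Finset.sum_congr rfl fun x _ => Finset.sum_comm
      _ = ∑ i, ∑ x : Bit, ∑ z : Bit, (K i)ᴴ * Qxz0 x z * K i := Finset.sum_comm
  rw [key]
  exact psd_sum _ _ fun i _ => one_sub_Qsum_psd.conjTranspose_mul_mul_same (K i)

lemma trace_Eop (K : Fin k → Matrix ((Bit × Bit) × Bit) (Bit × Fin dR) ℂ) (x z : Bit)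
    (ρ : Matrix (Bit × Fin dR) (Bit × Fin dR) ℂ) :
    (Qxz0 x z * applyCh K ρ).trace = (Eop K x z * ρ).trace := by
  simp only [applyCh, Eop, Matrix.mul_sum, Matrix.sum_mul, Matrix.trace_sum]
  refine Finset.sum_congr rfl fun i _ => ?_
  calc (Qxz0 x z * (K i * ρ * (K i)ᴴ)).trace
      = ((Qxz0 x z * (K i * ρ)) * (K i)ᴴ).trace := by simp only [Matrix.mul_assoc]
    _ = ((K i)ᴴ * (Qxz0 x z * (K i * ρ))).trace := Matrix.trace_mul_comm _ _
    _ = ((K i)ᴴ * Qxz0 x z * K i * ρ).trace := by simp only [Matrix.mul_assoc]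

lemma rhoBR_psd (ψ : Fin dH × Bit × Fin dR → ℂ) : (rhoBR ψ).PosSemidef := by
  have key : rhoBR ψ = (Matrix.of fun (h : Fin dH) (p : Bit × Fin dR) => star (ψ (h, p)))ᴴ *
      (Matrix.of fun (h : Fin dH) (p : Bit × Fin dR) => star (ψ (h, p))) := by
    ext p q
    simp only [rhoBR, Matrix.mul_apply, Matrix.conjTranspose_apply, Matrix.of_apply, star_star]
    exact Finset.sum_congr rfl fun h _ => by simp [mul_comm]
  rw [key]
  exact Matrix.posSemidef_conjTranspose_mul_self _

lemma rhoXZ_psd (ψ : Fin dH × Bit × Fin dR → ℂ) (x z : Bit) : (rhoXZ ψ x z).PosSemidef :=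
  (rhoBR_psd ψ).mul_mul_conjTranspose_same (maskB dR x z)

end Domain

lemma trace_tensor {n : ℕ} {κ : Type*} [Fintype κ] [DecidableEq κ]
    (A B : Fin n → Matrix κ κ ℂ) :
    ((Matrix.of fun u v : Fin n → κ => ∏ i, A i (u i) (v i)) *
     (Matrix.of fun u v : Fin n → κ => ∏ i, B i (u i) (v i))).trace
    = ∏ i, (A i * B i).trace := by
  simp only [Matrix.trace, Matrix.diag_apply, Matrix.mul_apply, Matrix.of_apply]
  calc ∑ u : Fin n → κ, ∑ v : Fin n → κ, (∏ i, A i (u i) (v i)) * ∏ i, B i (v i) (u i)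
      = ∑ u : Fin n → κ, ∑ v : Fin n → κ, ∏ i, (A i (u i) (v i) * B i (v i) (u i)) := by
        simp [Finset.prod_mul_distrib]
    _ = ∑ u : Fin n → κ, ∏ i, ∑ w, A i (u i) w * B i w (u i) := by
        refine Finset.sum_congr rfl fun u _ => ?_
        exact (Fintype.prod_sum fun i w => A i (u i) w * B i w (u i)).symm
    _ = ∏ i, ∑ w', ∑ w, A i w' w * B i w w' :=
        (Fintype.prod_sum fun i w' => ∑ w, A i w' w * B i w w').symm
    _ = ∏ i, (A i * B i).trace := by
        simp [Matrix.trace, Matrix.diag_apply, Matrix.mul_apply]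

lemma trace_kron_proj {α γ : Type*} [Fintype α] [Fintype γ] [DecidableEq γ]
    (Mq : γ → Matrix α α ℂ) (W : Matrix α α ℂ) (C : γ) :
    ((Matrix.of fun p q : α × γ => if p.2 = q.2 then Mq p.2 p.1 q.1 else 0) *
     (Matrix.of fun p q : α × γ => (if p.2 = C ∧ q.2 = C then (1:ℂ) else 0) * W p.1 q.1)).trace
    = (Mq C * W).trace := by
  simp only [Matrix.trace, Matrix.diag_apply, Matrix.mul_apply, Matrix.of_apply,
    Fintype.sum_prod_type]
  simp only [ite_mul, mul_ite, zero_mul, mul_zero, one_mul, Finset.sum_ite_eq,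
    Finset.sum_ite_eq', Finset.mem_univ, if_true]
  have key : ∀ (x x2 : α) (x1 x3 : γ),
      (if x3 = C ∧ x1 = C then if x1 = x3 then Mq x1 x x2 * W x2 x else 0 else 0)
      = (if x1 = C then (if x3 = C then Mq C x x2 * W x2 x else 0) else 0) := by
    intros x x2 x1 x3
    split_ifs <;> simp_all
  simp_rw [key]
  simp [Finset.sum_ite_eq, Finset.sum_ite_eq']



section Big

variable {dH dR k : ℕ}

/-- Tensor product of the per-slot POVM elements. -/
def Top (K : Fin k → Matrix ((Bit × Bit) × Bit) (Bit × Fin dR) ℂ) {n : ℕ}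
    (x z : Fin n → Bit) : Matrix (Fin n → Bit × Fin dR) (Fin n → Bit × Fin dR) ℂ :=
  Matrix.of fun u v => ∏ i, Eop K (x i) (z i) (u i) (v i)

/-- The quantum part of the distinguisher, conditioned on classical value `c`. -/
def Mc (K : Fin k → Matrix ((Bit × Bit) × Bit) (Bit × Fin dR) ℂ) {n : ℕ}
    (c : ((Fin n → Bit) × (Fin n → Bit)) × Bit) :
    Matrix (Fin n → Bit × Fin dR) (Fin n → Bit × Fin dR) ℂ :=
  ∑ x : Fin n → Bit, ∑ z : Fin n → Bit,
    if c.2 = dotB c.1.1 x + dotB c.1.2 z + 1 then Top K x z else 0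

/-- The full distinguisher measurement operator. -/
def Mbig (K : Fin k → Matrix ((Bit × Bit) × Bit) (Bit × Fin dR) ℂ) (n : ℕ) :
    Matrix ((Fin n → Bit × Fin dR) × ((Fin n → Bit) × (Fin n → Bit)) × Bit)
           ((Fin n → Bit × Fin dR) × ((Fin n → Bit) × (Fin n → Bit)) × Bit) ℂ :=
  Matrix.of fun p q => if p.2 = q.2 then Mc K p.2 p.1 q.1 else 0

lemma Top_psd (K : Fin k → Matrix ((Bit × Bit) × Bit) (Bit × Fin dR) ℂ) {n : ℕ}
    (x z : Fin n → Bit) : (Top K x z).PosSemidef :=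
  tensor_psd _ fun i => Eop_psd K (x i) (z i)

lemma Mc_psd (K : Fin k → Matrix ((Bit × Bit) × Bit) (Bit × Fin dR) ℂ) {n : ℕ}
    (c : ((Fin n → Bit) × (Fin n → Bit)) × Bit) : (Mc K c).PosSemidef := by
  refine psd_sum _ _ fun x _ => psd_sum _ _ fun z _ => ?_
  split_ifs
  · exact Top_psd K x z
  · exact Matrix.PosSemidef.zero

lemma Mbig_eq (K : Fin k → Matrix ((Bit × Bit) × Bit) (Bit × Fin dR) ℂ) (n : ℕ) :
    Mbig K n = ∑ c : ((Fin n → Bit) × (Fin n → Bit)) × Bit,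
      Matrix.of (fun p q : (Fin n → Bit × Fin dR) × ((Fin n → Bit) × (Fin n → Bit)) × Bit =>
        Mc K c p.1 q.1 *
          (Matrix.of fun d d' : ((Fin n → Bit) × (Fin n → Bit)) × Bit =>
            if d = c ∧ d' = c then (1:ℂ) else 0) p.2 q.2) := by
  ext p q
  simp only [Mbig, Matrix.of_apply, Matrix.sum_apply]
  rw [Finset.sum_eq_single q.2]
  · by_cases h : p.2 = q.2
    · simp [h]
    · have h2 : ¬(p.2 = q.2 ∧ q.2 = q.2) := fun hh => h hh.1
      simp [h, h2]
  · intro c _ hc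
    have h2 : ¬(p.2 = c ∧ q.2 = c) := fun hh => hc hh.2.symm
    simp [h2]
  · simp

lemma Mbig_psd (K : Fin k → Matrix ((Bit × Bit) × Bit) (Bit × Fin dR) ℂ) (n : ℕ) :
    (Mbig K n).PosSemidef := by
  rw [Mbig_eq]
  exact psd_sum _ _ fun c _ => kron_psd (Mc_psd K c) (proj_psd c)

lemma sum_Top (K : Fin k → Matrix ((Bit × Bit) × Bit) (Bit × Fin dR) ℂ) {n : ℕ} :
    (∑ x : Fin n → Bit, ∑ z : Fin n → Bit, Top K x z)
      = Matrix.of fun u v : Fin n → Bit × Fin dR =>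
          ∏ i, (∑ xb : Bit, ∑ zb : Bit, Eop K xb zb) (u i) (v i) := by
  ext u v
  simp only [Matrix.sum_apply, Top, Matrix.of_apply]
  calc ∑ x : Fin n → Bit, ∑ z : Fin n → Bit, ∏ i, Eop K (x i) (z i) (u i) (v i)
      = ∑ x : Fin n → Bit, ∏ i, ∑ zb : Bit, Eop K (x i) zb (u i) (v i) := by
        refine Finset.sum_congr rfl fun x _ => ?_
        exact (Fintype.prod_sum fun i zb => Eop K (x i) zb (u i) (v i)).symm
    _ = ∏ i, ∑ xb : Bit, ∑ zb : Bit, Eop K xb zb (u i) (v i) :=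
        (Fintype.prod_sum fun i xb => ∑ zb : Bit, Eop K xb zb (u i) (v i)).symm
    _ = ∏ i, (∑ xb : Bit, ∑ zb : Bit, Eop K xb zb) (u i) (v i) := by
        simp [Matrix.sum_apply]

lemma one_sub_Mc_psd {K : Fin k → Matrix ((Bit × Bit) × Bit) (Bit × Fin dR) ℂ}
    (hK : IsKraus K) {n : ℕ} (c : ((Fin n → Bit) × (Fin n → Bit)) × Bit) :
    ((1 : Matrix (Fin n → Bit × Fin dR) (Fin n → Bit × Fin dR) ℂ) - Mc K c).PosSemidef := by
  have h1 : Mc K c + (∑ x : Fin n → Bit, ∑ z : Fin n → Bit,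
        if ¬ (c.2 = dotB c.1.1 x + dotB c.1.2 z + 1) then Top K x z else 0)
      = ∑ x : Fin n → Bit, ∑ z : Fin n → Bit, Top K x z := by
    rw [Mc, ← Finset.sum_add_distrib]
    refine Finset.sum_congr rfl fun x _ => ?_
    rw [← Finset.sum_add_distrib]
    refine Finset.sum_congr rfl fun z _ => ?_
    split_ifs <;> simp
  have h2 : (1 : Matrix (Fin n → Bit × Fin dR) (Fin n → Bit × Fin dR) ℂ) - Mc K c
      = ((1 : Matrix (Fin n → Bit × Fin dR) (Fin n → Bit × Fin dR) ℂ) -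
          ∑ x : Fin n → Bit, ∑ z : Fin n → Bit, Top K x z)
        + (∑ x : Fin n → Bit, ∑ z : Fin n → Bit,
            if ¬ (c.2 = dotB c.1.1 x + dotB c.1.2 z + 1) then Top K x z else 0) := by
    rw [← h1]; abel
  rw [h2]
  refine Matrix.PosSemidef.add ?_ (psd_sum _ _ fun x _ => psd_sum _ _ fun z _ => ?_)
  · rw [sum_Top]
    exact one_sub_tensor_psd
      (psd_sum _ _ fun xb _ => psd_sum _ _ fun zb _ => Eop_psd K xb zb)
      (one_sub_Esum_psd hK)
  · split_ifs
    all_goals first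
      | exact Top_psd K x z
      | exact Matrix.PosSemidef.zero

lemma one_sub_Mbig_psd {K : Fin k → Matrix ((Bit × Bit) × Bit) (Bit × Fin dR) ℂ}
    (hK : IsKraus K) (n : ℕ) : (1 - Mbig K n).PosSemidef := by
  have key : (1 : Matrix ((Fin n → Bit × Fin dR) × ((Fin n → Bit) × (Fin n → Bit)) × Bit)
        ((Fin n → Bit × Fin dR) × ((Fin n → Bit) × (Fin n → Bit)) × Bit) ℂ) - Mbig K n
      = ∑ c : ((Fin n → Bit) × (Fin n → Bit)) × Bit,
        Matrix.of (fun p q : (Fin n → Bit × Fin dR) × ((Fin n → Bit) × (Fin n → Bit)) × Bit =>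
          ((1 : Matrix (Fin n → Bit × Fin dR) (Fin n → Bit × Fin dR) ℂ) - Mc K c) p.1 q.1 *
            (Matrix.of fun d d' : ((Fin n → Bit) × (Fin n → Bit)) × Bit =>
              if d = c ∧ d' = c then (1:ℂ) else 0) p.2 q.2) := by
    ext p q
    simp only [Matrix.sub_apply, Matrix.of_apply, Matrix.sum_apply, Mbig]
    rw [Finset.sum_eq_single q.2]
    · by_cases h : p.2 = q.2
      · simp [h, Matrix.sub_apply, Matrix.one_apply, Prod.ext_iff]
      · have h1 : ¬(p = q) := fun hh => h (congrArg Prod.snd hh)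
        have h2 : ¬(p.2 = q.2 ∧ q.2 = q.2) := fun hh => h hh.1
        simp [Matrix.one_apply, h, h1, h2]
    · intro c _ hc
      have h2 : ¬(p.2 = c ∧ q.2 = c) := fun hh => hc hh.2.symm
      simp [h2]
    · simp
  rw [key]
  exact psd_sum _ _ fun c _ => kron_psd (one_sub_Mc_psd hK c) (proj_psd c)

end Big

section Trace

variable {dH dR k : ℕ}

lemma trace_Mc_rho (K : Fin k → Matrix ((Bit × Bit) × Bit) (Bit × Fin dR) ℂ) {n : ℕ}
    (ψ : Fin dH × Bit × Fin dR → ℂ) (x z : Fin n → Bit)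
    (c : ((Fin n → Bit) × (Fin n → Bit)) × Bit) :
    (Mc K c * rhoVec ψ x z).trace
      = ∑ xh : Fin n → Bit, ∑ zh : Fin n → Bit,
          if c.2 = dotB c.1.1 xh + dotB c.1.2 zh + 1 then
            ∏ i, (Eop K (xh i) (zh i) * rhoXZ ψ (x i) (z i)).trace else 0 := by
  simp only [Mc, Matrix.sum_mul, Matrix.trace_sum]
  refine Finset.sum_congr rfl fun xh _ => Finset.sum_congr rfl fun zh _ => ?_
  split_ifs
  · exact trace_tensor (fun i => Eop K (xh i) (zh i)) (fun i => rhoXZ ψ (x i) (z i))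
  · simp

lemma trace_Mbig_rbar (K : Fin k → Matrix ((Bit × Bit) × Bit) (Bit × Fin dR) ℂ) {n : ℕ}
    (ψ : Fin dH × Bit × Fin dR → ℂ) (b : Bit) :
    (Mbig K n * rbarN ψ n b).trace
      = (((4:ℂ) ^ (2 * n))⁻¹) * ∑ x : Fin n → Bit, ∑ z : Fin n → Bit,
          ∑ a : Fin n → Bit, ∑ a' : Fin n → Bit,
            (Mc K ((a, a'), dotB a x + dotB a' z + b) * rhoVec ψ x z).trace := by
  rw [rbarN, Matrix.mul_smul, Matrix.trace_smul]
  simp only [Matrix.mul_sum, Matrix.trace_sum, smul_eq_mul]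
  refine congrArg (HMul.hMul (((4:ℂ) ^ (2 * n))⁻¹)) ?_
  refine Finset.sum_congr rfl fun x _ => Finset.sum_congr rfl fun z _ =>
    Finset.sum_congr rfl fun a _ => Finset.sum_congr rfl fun a' _ => ?_
  exact trace_kron_proj (fun d => Mc K d) (rhoVec ψ x z) ((a, a'), dotB a x + dotB a' z + b)

lemma bit_ite_sub (s t : Bit) :
    ((if s + 1 = t + 1 then (1:ℂ) else 0) - (if s + 0 = t + 1 then 1 else 0)) = chi (s + t) := by
  have hs := (by decide : ∀ w : Bit, w = 0 ∨ w = 1) s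
  have ht := (by decide : ∀ w : Bit, w = 0 ∨ w = 1) t
  have h11 : (1 + 1 : Bit) = 0 := by decide
  have h01 : (0:Bit) ≠ 1 := by decide
  have h10 : (1:Bit) ≠ 0 := by decide
  rcases hs with rfl | rfl <;> rcases ht with rfl | rfl <;>
    simp [chi, h11, h01, h10]

lemma sum_swap4 {n : ℕ} (t : (Fin n → Bit) → (Fin n → Bit) → (Fin n → Bit) → (Fin n → Bit) → ℂ) :
    (∑ a : Fin n → Bit, ∑ a' : Fin n → Bit, ∑ xh : Fin n → Bit, ∑ zh : Fin n → Bit, t a a' xh zh)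
    = ∑ xh : Fin n → Bit, ∑ zh : Fin n → Bit, ∑ a : Fin n → Bit, ∑ a' : Fin n → Bit, t a a' xh zh := by
  calc (∑ a : Fin n → Bit, ∑ a' : Fin n → Bit, ∑ xh : Fin n → Bit, ∑ zh : Fin n → Bit, t a a' xh zh)
      = ∑ a : Fin n → Bit, ∑ xh : Fin n → Bit, ∑ a' : Fin n → Bit, ∑ zh : Fin n → Bit, t a a' xh zh :=
        Finset.sum_congr rfl fun a _ => Finset.sum_comm
    _ = ∑ xh : Fin n → Bit, ∑ a : Fin n → Bit, ∑ a' : Fin n → Bit, ∑ zh : Fin n → Bit, t a a' xh zh :=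
        Finset.sum_comm
    _ = ∑ xh : Fin n → Bit, ∑ a : Fin n → Bit, ∑ zh : Fin n → Bit, ∑ a' : Fin n → Bit, t a a' xh zh :=
        Finset.sum_congr rfl fun xh _ => Finset.sum_congr rfl fun a _ => Finset.sum_comm
    _ = ∑ xh : Fin n → Bit, ∑ zh : Fin n → Bit, ∑ a : Fin n → Bit, ∑ a' : Fin n → Bit, t a a' xh zh :=
        Finset.sum_congr rfl fun xh _ => Finset.sum_comm

lemma diff_sum {n : ℕ} (x z : Fin n → Bit) (P : (Fin n → Bit) → (Fin n → Bit) → ℂ) :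
    (∑ a : Fin n → Bit, ∑ a' : Fin n → Bit, ∑ xh : Fin n → Bit, ∑ zh : Fin n → Bit,
        ((if dotB a x + dotB a' z + 1 = dotB a xh + dotB a' zh + 1 then P xh zh else 0)
        - (if dotB a x + dotB a' z + 0 = dotB a xh + dotB a' zh + 1 then P xh zh else 0)))
    = (4:ℂ)^n * P x z := by
  have h1 : ∀ a a' xh zh : Fin n → Bit,
      ((if dotB a x + dotB a' z + 1 = dotB a xh + dotB a' zh + 1 then P xh zh else 0)
        - (if dotB a x + dotB a' z + 0 = dotB a xh + dotB a' zh + 1 then P xh zh else 0))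
      = (chi (dotB a (x + xh)) * chi (dotB a' (z + zh))) * P xh zh := by
    intro a a' xh zh
    have e1 : (if dotB a x + dotB a' z + 1 = dotB a xh + dotB a' zh + 1 then P xh zh else 0)
        = (if dotB a x + dotB a' z + 1 = dotB a xh + dotB a' zh + 1 then (1:ℂ) else 0)
          * P xh zh := by split_ifs <;> simp
    have e0 : (if dotB a x + dotB a' z + 0 = dotB a xh + dotB a' zh + 1 then P xh zh else 0)
        = (if dotB a x + dotB a' z + 0 = dotB a xh + dotB a' zh + 1 then (1:ℂ) else 0)
          * P xh zh := by split_ifs <;> simp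
    rw [e1, e0, ← sub_mul, bit_ite_sub]
    congr 2
    have heq : dotB a x + dotB a' z + (dotB a xh + dotB a' zh)
        = dotB a (x + xh) + dotB a' (z + zh) := by
      rw [dotB_add_right, dotB_add_right]; ring
    rw [heq, chi_add]
  simp_rw [h1]
  rw [sum_swap4 (fun a a' xh zh => (chi (dotB a (x + xh)) * chi (dotB a' (z + zh))) * P xh zh)]
  have h2 : ∀ xh zh : Fin n → Bit,
      (∑ a : Fin n → Bit, ∑ a' : Fin n → Bit,
        (chi (dotB a (x + xh)) * chi (dotB a' (z + zh))) * P xh zh)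
      = ((if x + xh = 0 then (2:ℂ)^n else 0) * (if z + zh = 0 then (2:ℂ)^n else 0))
          * P xh zh := by
    intro xh zh
    rw [← char_sum (x + xh), ← char_sum (z + zh), Finset.sum_mul_sum, Finset.sum_mul]
    refine Finset.sum_congr rfl fun a _ => ?_
    rw [Finset.sum_mul]
  calc (∑ xh : Fin n → Bit, ∑ zh : Fin n → Bit, ∑ a : Fin n → Bit, ∑ a' : Fin n → Bit,
        (chi (dotB a (x + xh)) * chi (dotB a' (z + zh))) * P xh zh)
      = ∑ xh : Fin n → Bit, ∑ zh : Fin n → Bit,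
        ((if x + xh = 0 then (2:ℂ)^n else 0) * (if z + zh = 0 then (2:ℂ)^n else 0))
          * P xh zh :=
        Finset.sum_congr rfl fun xh _ => Finset.sum_congr rfl fun zh _ => h2 xh zh
    _ = (4:ℂ)^n * P x z := by
        have hc : ∀ (w wh : Fin n → Bit), (w + wh = 0) ↔ (wh = w) := fun w wh =>
          (add_eq_zero_iff_bitvec w wh).trans eq_comm
        simp only [hc]
        simp only [ite_mul, zero_mul, mul_ite, mul_zero]
        simp only [Finset.sum_ite_eq', Finset.mem_univ, if_true]
        rw [← mul_pow]
        norm_num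


lemma sum_prod_diag {n : ℕ} (r : Bit → Bit → ℂ) :
    (∑ x : Fin n → Bit, ∑ z : Fin n → Bit, ∏ i, r (x i) (z i))
      = (∑ xb : Bit, ∑ zb : Bit, r xb zb)^n := by
  calc (∑ x : Fin n → Bit, ∑ z : Fin n → Bit, ∏ i, r (x i) (z i))
      = ∑ x : Fin n → Bit, ∏ i, ∑ zb : Bit, r (x i) zb := by
        refine Finset.sum_congr rfl fun x _ => ?_
        exact (Fintype.prod_sum fun i zb => r (x i) zb).symm
    _ = ∏ _i : Fin n, ∑ xb : Bit, ∑ zb : Bit, r xb zb :=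
        (Fintype.prod_sum fun _i xb => ∑ zb : Bit, r xb zb).symm
    _ = (∑ xb : Bit, ∑ zb : Bit, r xb zb)^n := by
        rw [Finset.prod_const, Finset.card_univ, Fintype.card_fin]

end Trace

end BHRD

namespace BHRD

/-- a `(1, 1-η)`-superdense decoder against `|ψ⟩` yields a statistical
distinguisher with advantage at least `1 - 2nη` between the `n`-slot candidate EFI pair
`(ρ̄₀, ρ̄₁)` built from `|ψ⟩`. -/
theorem strong_superdense_decoder_implies_nslot_statistical_distinguisher
    (dH dR : ℕ) (hdH : 1 ≤ dH) (hdR : 1 ≤ dR)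
    (ψ : Fin dH × Bit × Fin dR → ℂ)
    (hψ : ∑ p, Complex.normSq (ψ p) = 1)
    (n : ℕ) (hn : 1 ≤ n)
    (η : ℝ) (hη : η ∈ Set.Icc (0:ℝ) 1)
    (hdec : ∃ (k : ℕ) (S : Fin k → Matrix ((Bit × Bit) × Bit) (Bit × Fin dR) ℂ),
      IsSupDecoder ψ 1 (1 - η) S) :
    ∃ M : Matrix ((Fin n → Bit × Fin dR) × ((Fin n → Bit) × (Fin n → Bit)) × Bit)
              ((Fin n → Bit × Fin dR) × ((Fin n → Bit) × (Fin n → Bit)) × Bit) ℂ,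
      M.PosSemidef ∧ (1 - M).PosSemidef ∧
      1 - 2 * n * η ≤ ((M * (rbarN ψ n 1 - rbarN ψ n 0)).trace).re := by
  obtain ⟨k, S, hKr, hγ, hε⟩ := hdec
  refine ⟨Mbig S n, Mbig_psd S n, one_sub_Mbig_psd hKr n, ?_⟩
  -- real, nonnegative per-slot success probabilities
  have hr : ∀ xb zb : Bit, ∃ e : ℝ, 0 ≤ e ∧ (Eop S xb zb * rhoXZ ψ xb zb).trace = (e:ℂ) :=
    fun xb zb => psd_mul_trace_real (Eop_psd S xb zb) (rhoXZ_psd ψ xb zb)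
  choose e he hre using hr
  set se : ℝ := ∑ xb : Bit, ∑ zb : Bit, e xb zb with hse_def
  set p : ℝ := (1/4) * se with hp_def
  have hQre : ∀ xb zb : Bit,
      ((Qxz0 xb zb * applyCh S (rhoXZ ψ xb zb)).trace).re = e xb zb := by
    intro xb zb
    rw [trace_Eop S xb zb (rhoXZ ψ xb zb), hre xb zb]
    simp
  have hsum_e : (1/4 : ℝ) * ∑ xb : Bit, ∑ zb : Bit,
      ((Qxz0 xb zb * applyCh S (rhoXZ ψ xb zb)).trace).re = p := by
    rw [hp_def, hse_def]
    congr 1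
    exact Finset.sum_congr rfl fun xb _ => Finset.sum_congr rfl fun zb _ => hQre xb zb
  rw [hsum_e] at hε
  have hfac : (0:ℝ) ≤ 1/4 + 3/4 * (1 - η) := by nlinarith [hη.2]
  have hp_lb : 1 - (3/4) * η ≤ p := by
    nlinarith [hε, mul_nonneg (sub_nonneg.mpr hγ) hfac]
  -- the trace identity
  have t2 : ∀ b : Bit, (Mbig S n * rbarN ψ n b).trace
      = (((4:ℂ) ^ (2 * n))⁻¹) * ∑ x : Fin n → Bit, ∑ z : Fin n → Bit,
          ∑ a : Fin n → Bit, ∑ a' : Fin n → Bit,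
            ∑ xh : Fin n → Bit, ∑ zh : Fin n → Bit,
              if dotB a x + dotB a' z + b = dotB a xh + dotB a' zh + 1 then
                ∏ i, (Eop S (xh i) (zh i) * rhoXZ ψ (x i) (z i)).trace else 0 := by
    intro b
    rw [trace_Mbig_rbar S ψ b]
    refine congrArg (HMul.hMul (((4:ℂ) ^ (2 * n))⁻¹)) ?_
    refine Finset.sum_congr rfl fun x _ => Finset.sum_congr rfl fun z _ =>
      Finset.sum_congr rfl fun a _ => Finset.sum_congr rfl fun a' _ => ?_
    exact trace_Mc_rho S ψ x z ((a, a'), dotB a x + dotB a' z + b)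
  have t3 : (Mbig S n * (rbarN ψ n 1 - rbarN ψ n 0)).trace
      = (((4:ℂ) ^ (2 * n))⁻¹) * ∑ x : Fin n → Bit, ∑ z : Fin n → Bit,
          (4:ℂ)^n * ∏ i, (Eop S (x i) (z i) * rhoXZ ψ (x i) (z i)).trace := by
    rw [Matrix.mul_sub, Matrix.trace_sub, t2 1, t2 0, ← mul_sub]
    refine congrArg (HMul.hMul (((4:ℂ) ^ (2 * n))⁻¹)) ?_
    simp only [← Finset.sum_sub_distrib]
    refine Finset.sum_congr rfl fun x _ => Finset.sum_congr rfl fun z _ => ?_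
    exact diff_sum x z
      (fun xh zh => ∏ i, (Eop S (xh i) (zh i) * rhoXZ ψ (x i) (z i)).trace)
  have h4n : ((4:ℂ)^n) ≠ 0 := pow_ne_zero n (by norm_num)
  have key : (Mbig S n * (rbarN ψ n 1 - rbarN ψ n 0)).trace = ((p^n : ℝ) : ℂ) := by
    rw [t3]
    simp only [← Finset.mul_sum]
    have hsum : (∑ x : Fin n → Bit, ∑ z : Fin n → Bit,
        ∏ i, (Eop S (x i) (z i) * rhoXZ ψ (x i) (z i)).trace) = ((se : ℝ) : ℂ)^n := by
      rw [sum_prod_diag (fun xb zb => (Eop S xb zb * rhoXZ ψ xb zb).trace)]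
      congr 1
      rw [hse_def]
      push_cast
      exact Finset.sum_congr rfl fun xb _ => Finset.sum_congr rfl fun zb _ => hre xb zb
    rw [hsum, hp_def]
    have h2n : ((4:ℂ) ^ (2 * n)) = (4:ℂ)^n * (4:ℂ)^n := by rw [two_mul, pow_add]
    rw [h2n]
    push_cast
    field_simp [h4n]
    rw [← mul_pow]
    congr 1
    ring
  rw [key]
  rw [Complex.ofReal_re]
  -- final numeric bound
  have hn0 : (0:ℝ) ≤ (n:ℝ) := Nat.cast_nonneg n
  have hpow : 1 + (n:ℝ) * (p - 1) ≤ p^n := by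
    have h := one_add_mul_le_pow (a := p - 1) (by nlinarith [hp_lb, hη.2] : (-2:ℝ) ≤ p - 1) n
    simpa using h
  have h5 : (n:ℝ) * (1 - p) ≤ (n:ℝ) * ((3/4) * η) :=
    mul_le_mul_of_nonneg_left (by linarith) hn0
  have h6 : (n:ℝ) * ((3/4) * η) ≤ 2 * (n:ℝ) * η := by nlinarith [mul_nonneg hn0 hη.1]
  nlinarith [hpow, h5, h6]

end BHRD
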